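/- arXiv:1603.09275 — 4 statements merged into one kernel-verified Lean document; each statement's English description precedes it below -/
import Mathlib

section
/- A Brandt semigroup B(G, I) is finitely generated (as an inverse semigroup) if and only if I is finite and G is finitely generated. -/
inductive InvGen {S : Type*} [Mul S] [Inv S] (X : Set S) : S → Prop
  | base {x : S} : x ∈ X → InvGen X x
  | mul {a b : S} : InvGen X a → InvGen X b → InvGen X (a * b)
  | inv {a : S} : InvGen X a → InvGen X a⁻¹

def IsInvSub {S : Type*} [Mul S] [Inv S] (T : Set S) : Prop :=
  (∀ a ∈ T, ∀ b ∈ T, a * b ∈ T) ∧ ∀ a ∈ T, a⁻¹ ∈ T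

def InvFG {S : Type*} [Mul S] [Inv S] (T : Set S) : Prop :=
  ∃ X : Finset S, ↑X ⊆ T ∧ T = {s | InvGen (↑X : Set S) s}

def Howson (S : Type*) [Mul S] [Inv S] : Prop :=
  ∀ U V : Set S, IsInvSub U → IsInvSub V → InvFG U → InvFG V → InvFG (U ∩ V)
abbrev Brandt (G I : Type*) := Option (I × G × I)

open Classical in
noncomputable instance {G I : Type*} [Group G] : Mul (Brandt G I) :=
  ⟨fun a b =>
    match a, b with
    | some (i, g, j), some (j', h, k) => if j = j' then some (i, g * h, k) else none
    | _, _ => none⟩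

instance {G I : Type*} [Group G] : Inv (Brandt G I) :=
  ⟨fun a =>
    match a with
    | some (i, g, j) => some (j, g⁻¹, i)
    | none => none⟩

section Aux

open Classical

variable {G I : Type*} [Group G]

lemma brandt_mul_some_some (i : I) (g : G) (j j' : I) (h : G) (k : I) :
    (some (i, g, j) : Brandt G I) * some (j', h, k) =
      if j = j' then some (i, g * h, k) else none := rfl

lemma brandt_none_mul (a : Brandt G I) : (none : Brandt G I) * a = none := by
  cases a <;> rfl

lemma brandt_mul_none (a : Brandt G I) : a * (none : Brandt G I) = none := by
  rcases a with _ | ⟨i, g, j⟩ <;> rfl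

lemma brandt_inv_some (i : I) (g : G) (j : I) :
    (some (i, g, j) : Brandt G I)⁻¹ = some (j, g⁻¹, i) := rfl

lemma brandt_mul_eq_some {a b : Brandt G I} {i : I} {g : G} {k : I}
    (h : a * b = some (i, g, k)) :
    ∃ (g₁ g₂ : G) (j : I), a = some (i, g₁, j) ∧ b = some (j, g₂, k) ∧ g = g₁ * g₂ := by
  rcases a with _ | ⟨i', g₁, j₁⟩
  · rw [brandt_none_mul] at h; exact absurd h (by simp)
  rcases b with _ | ⟨j₂, g₂, k'⟩
  · rw [brandt_mul_none] at h; exact absurd h (by simp)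
  rw [brandt_mul_some_some] at h
  split_ifs at h with hj
  · subst hj
    simp only [Option.some.injEq, Prod.mk.injEq] at h
    obtain ⟨h1, h2, h3⟩ := h
    exact ⟨g₁, g₂, j₁, by rw [h1], by rw [h3], h2.symm⟩

/-- indices occurring in a finite set of Brandt elements -/
noncomputable def brandtEnds (X : Finset (Brandt G I)) : Finset I :=
  X.biUnion fun a =>
    match a with
    | some (i, _, j) => {i, j}
    | none => ∅

/-- middle group elements occurring in a finite set of Brandt elements -/
noncomputable def brandtMids (X : Finset (Brandt G I)) : Finset G :=
  X.biUnion fun a =>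
    match a with
    | some (_, g, _) => {g}
    | none => ∅

lemma brandt_gen_ends {X : Finset (Brandt G I)} {s : Brandt G I}
    (hs : InvGen (↑X : Set (Brandt G I)) s) :
    ∀ i g j, s = some (i, g, j) →
      i ∈ brandtEnds X ∧ j ∈ brandtEnds X ∧ g ∈ Subgroup.closure (↑(brandtMids X) : Set G) := by
  induction hs with
  | base hx =>
    intro i g j hij
    subst hij
    refine ⟨?_, ?_, Subgroup.subset_closure ?_⟩
    · exact Finset.mem_biUnion.2 ⟨_, hx, by simp⟩
    · exact Finset.mem_biUnion.2 ⟨_, hx, by simp⟩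
    · exact Finset.mem_biUnion.2 ⟨_, hx, by simp⟩
  | mul ha hb iha ihb =>
    intro i g j hij
    obtain ⟨g₁, g₂, m, ha', hb', hg⟩ := brandt_mul_eq_some hij
    obtain ⟨h1, -, h3⟩ := iha i g₁ m ha'
    obtain ⟨-, h2, h4⟩ := ihb m g₂ j hb'
    exact ⟨h1, h2, hg ▸ mul_mem h3 h4⟩
  | inv ha iha =>
    intro i g j hij
    rename_i a
    rcases a with _ | ⟨i', g', j'⟩
    · exact absurd hij (by simp [show (none : Brandt G I)⁻¹ = none from rfl])
    rw [brandt_inv_some] at hij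
    simp only [Option.some.injEq, Prod.mk.injEq] at hij
    obtain ⟨h1, h2, h3⟩ := hij
    obtain ⟨e1, e2, e3⟩ := iha i' g' j' rfl
    exact ⟨h1 ▸ e2, h3 ▸ e1, h2 ▸ inv_mem e3⟩

end Aux

theorem stmt_0 {G I : Type*} [Group G] [Nonempty I] :
    InvFG (Set.univ : Set (Brandt G I)) ↔ Finite I ∧ Group.FG G := by
  classical
  constructor
  · rintro ⟨X, -, hgen⟩
    have hall : ∀ s : Brandt G I, InvGen (↑X : Set (Brandt G I)) s := by
      intro s
      have : s ∈ (Set.univ : Set (Brandt G I)) := trivial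
      rwa [hgen] at this
    constructor
    · have hsub : (Set.univ : Set I) ⊆ ↑(brandtEnds X) := by
        intro i _
        exact (brandt_gen_ends (hall (some (i, 1, i))) i 1 i rfl).1
      have : (Set.univ : Set I).Finite := Set.Finite.subset (Finset.finite_toSet _) hsub
      exact Set.finite_univ_iff.mp this
    · rw [Group.fg_iff]
      refine ⟨↑(brandtMids X), ?_, Finset.finite_toSet _⟩
      rw [eq_top_iff]
      intro g _
      obtain ⟨i₀⟩ := ‹Nonempty I›
      exact (brandt_gen_ends (hall (some (i₀, g, i₀))) i₀ g i₀ rfl).2.2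
  · rintro ⟨hI, hG⟩
    have : Fintype I := Fintype.ofFinite I
    obtain ⟨S, hS, hSfin⟩ := Group.fg_iff.mp hG
    set S' : Finset G := insert 1 hSfin.toFinset with hS'
    set X : Finset (Brandt G I) :=
      insert none ((Finset.univ ×ˢ S' ×ˢ Finset.univ).image some) with hX
    have hmem : ∀ i : I, ∀ g ∈ S', ∀ j : I, (some (i, g, j) : Brandt G I) ∈ X := by
      intro i g hg j
      refine Finset.mem_insert_of_mem (Finset.mem_image.2 ⟨(i, g, j), ?_, rfl⟩)
      simp [hg]
    have key : ∀ (g : G) (i j : I), InvGen (↑X : Set (Brandt G I)) (some (i, g, j)) := by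
      intro g
      have hg : g ∈ Subgroup.closure S := by rw [hS]; trivial
      induction hg using Subgroup.closure_induction with
      | mem x hx =>
        intro i j
        exact InvGen.base (hmem i x (by simp [hS', Set.Finite.mem_toFinset, hx]) j)
      | one =>
        intro i j
        exact InvGen.base (hmem i 1 (by simp [hS']) j)
      | mul x y hx hy ihx ihy =>
        intro i j
        have := InvGen.mul (ihx i i) (ihy i j)
        rwa [brandt_mul_some_some, if_pos rfl] at this
      | inv x hx ihx =>
        intro i j
        have := InvGen.inv (ihx j i)
        rwa [brandt_inv_some] at this
    refine ⟨X, by simp, ?_⟩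
    ext s
    simp only [Set.mem_univ, Set.mem_setOf_eq, true_iff]
    rcases s with _ | ⟨i, g, j⟩
    · exact InvGen.base (by simp [hX])
    · exact key g i j
end

section
/- Let S be an inverse semigroup, T = ⟨X⟩ the inverse subsemigroup of S generated by a subset X, and J a 𝒥-class of S. Then every element of T ∩ J lies in the inverse subsemigroup of S generated by the set (E_J · X) ∩ T ∩ J, where E_J · X = { e·x : e ∈ E_J, x ∈ X } and E_J denotes the set of idempotents of S lying in J. -/
class InverseSemigroup (S : Type*) extends Semigroup S, Inv S where
  mul_inv_mul : ∀ a : S, a * a⁻¹ * a = a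
  inv_invol : ∀ a : S, a⁻¹⁻¹ = a
  idem_comm : ∀ a b : S, (a * a⁻¹) * (b * b⁻¹) = (b * b⁻¹) * (a * a⁻¹)

def Idl {S : Type*} [Semigroup S] (a : S) : Set S :=
  {a} ∪ {x | ∃ s, s * a = x} ∪ {x | ∃ s, a * s = x} ∪ {x | ∃ s t, s * a * t = x}

def Jrel {S : Type*} [Semigroup S] (a b : S) : Prop := Idl a = Idl b

def Jcl {S : Type*} [Semigroup S] (a : S) : Set S := {b | Jrel a b}

section AuxIS

variable {S : Type*} [InverseSemigroup S]

lemma mia'' (p : S) : p * p⁻¹ * p = p := InverseSemigroup.mul_inv_mul p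

lemma inv2 (p : S) : p⁻¹⁻¹ = p := InverseSemigroup.inv_invol p

lemma mia' (p : S) : p * (p⁻¹ * p) = p := by rw [← mul_assoc]; exact mia'' p

lemma imi' (p : S) : p⁻¹ * (p * p⁻¹) = p⁻¹ := by
  have h := mia'' (p⁻¹ : S)
  rwa [inv2, mul_assoc] at h

lemma mia_ext (p w : S) : p * (p⁻¹ * (p * w)) = p * w := by
  rw [← mul_assoc, ← mul_assoc, mia'']

lemma proj1_idem (p : S) : (p * p⁻¹) * (p * p⁻¹) = p * p⁻¹ := by
  rw [mul_assoc, mia_ext]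

lemma proj2_idem (p : S) : (p⁻¹ * p) * (p⁻¹ * p) = p⁻¹ * p := by
  rw [mul_assoc, ← mul_assoc p, mia'']

lemma idem_inv {e : S} (h : e * e = e) : e⁻¹ = e := by
  have hc : (e * e⁻¹) * (e⁻¹ * e) = (e⁻¹ * e) * (e * e⁻¹) := by
    have h2 := InverseSemigroup.idem_comm e e⁻¹
    rwa [inv2] at h2
  have hgf : (e⁻¹ * e) * (e * e⁻¹) = e⁻¹ := by
    calc (e⁻¹ * e) * (e * e⁻¹) = e⁻¹ * ((e * e) * e⁻¹) := by simp only [mul_assoc]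
    _ = e⁻¹ * (e * e⁻¹) := by rw [h]
    _ = e⁻¹ := imi' e
  have hfg : (e * e⁻¹) * (e⁻¹ * e) = e⁻¹ := by rw [hc, hgf]
  have key : e = e⁻¹ := by
    calc e = e * e⁻¹ * e := (mia'' e).symm
    _ = e * ((e * e⁻¹) * (e⁻¹ * e)) * e := by rw [hfg]
    _ = (e * e) * (e⁻¹ * (e⁻¹ * (e * e))) := by simp only [mul_assoc]
    _ = e * (e⁻¹ * (e⁻¹ * e)) := by rw [h]
    _ = (e * e⁻¹) * (e⁻¹ * e) := by simp only [mul_assoc]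
    _ = e⁻¹ := hfg
  exact key.symm

lemma idem_comm' {e f : S} (he : e * e = e) (hf : f * f = f) : e * f = f * e := by
  have he' : e * e⁻¹ = e := by rw [idem_inv he]; exact he
  have hf' : f * f⁻¹ = f := by rw [idem_inv hf]; exact hf
  have h2 := InverseSemigroup.idem_comm e f
  rwa [he', hf'] at h2

lemma invUniq {p x : S} (h1 : p * x * p = p) (h2 : x * p * x = x) : x = p⁻¹ := by
  have h1' : p * (x * p) = p := by rw [← mul_assoc]; exact h1
  have h2' : x * (p * x) = x := by rw [← mul_assoc]; exact h2
  have hax : (p * x) * (p * x) = p * x := by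
    calc (p * x) * (p * x) = p * (x * (p * x)) := by simp only [mul_assoc]
    _ = p * x := by rw [h2']
  have hp1 : (p * p⁻¹) * (p * p⁻¹) = p * p⁻¹ := proj1_idem p
  have hp2 : (p⁻¹ * p) * (p⁻¹ * p) = p⁻¹ * p := proj2_idem p
  have hxa : (x * p) * (x * p) = x * p := by
    calc (x * p) * (x * p) = x * (p * (x * p)) := by simp only [mul_assoc]
    _ = x * p := by rw [h1']
  have c1 : p * x = p * p⁻¹ := by
    calc p * x = (p * (p⁻¹ * p)) * x := by rw [mia']
    _ = (p * p⁻¹) * (p * x) := by simp only [mul_assoc]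
    _ = (p * x) * (p * p⁻¹) := idem_comm' hp1 hax
    _ = p * x * p * p⁻¹ := by rw [← mul_assoc]
    _ = p * p⁻¹ := by rw [h1]
  have c2 : x * p = p⁻¹ * p := by
    calc x * p = (x * p) * (p⁻¹ * p) := by rw [mul_assoc x p, mia']
    _ = (p⁻¹ * p) * (x * p) := idem_comm' hxa hp2
    _ = p⁻¹ * (p * x * p) := by simp only [mul_assoc]
    _ = p⁻¹ * p := by rw [h1]
  calc x = x * (p * x) := h2'.symm
  _ = (x * p) * x := by rw [mul_assoc]
  _ = (p⁻¹ * p) * x := by rw [c2]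
  _ = p⁻¹ * (p * x) := mul_assoc _ _ _
  _ = p⁻¹ * (p * p⁻¹) := by rw [c1]
  _ = p⁻¹ := imi' p

lemma mir (a b : S) : (a * b)⁻¹ = b⁻¹ * a⁻¹ := by
  have pc : (b * b⁻¹) * (a⁻¹ * a) = (a⁻¹ * a) * (b * b⁻¹) := by
    have h := InverseSemigroup.idem_comm b a⁻¹
    rwa [inv2] at h
  have h1 : (a * b) * (b⁻¹ * a⁻¹) * (a * b) = a * b := by
    calc (a * b) * (b⁻¹ * a⁻¹) * (a * b)
        = a * ((b * b⁻¹) * (a⁻¹ * a)) * b := by simp only [mul_assoc]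
    _ = a * ((a⁻¹ * a) * (b * b⁻¹)) * b := by rw [pc]
    _ = (a * (a⁻¹ * a)) * (b * (b⁻¹ * b)) := by simp only [mul_assoc]
    _ = a * b := by rw [mia', mia']
  have h2 : (b⁻¹ * a⁻¹) * (a * b) * (b⁻¹ * a⁻¹) = b⁻¹ * a⁻¹ := by
    calc (b⁻¹ * a⁻¹) * (a * b) * (b⁻¹ * a⁻¹)
        = b⁻¹ * ((a⁻¹ * a) * (b * b⁻¹)) * a⁻¹ := by simp only [mul_assoc]
    _ = b⁻¹ * ((b * b⁻¹) * (a⁻¹ * a)) * a⁻¹ := by rw [pc]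
    _ = (b⁻¹ * (b * b⁻¹)) * (a⁻¹ * (a * a⁻¹)) := by simp only [mul_assoc]
    _ = b⁻¹ * a⁻¹ := by rw [imi', imi']
  exact (invUniq h1 h2).symm

lemma mem_Idl {a x : S} : x ∈ Idl a ↔ ∃ s u, s * a * u = x := by
  constructor
  · rintro (((h | ⟨s, rfl⟩) | ⟨s, rfl⟩) | ⟨s, u, h⟩)
    · rw [show x = a from h]
      exact ⟨a * a⁻¹, a⁻¹ * a, by rw [mia'']; exact mia' a⟩
    · exact ⟨s, a⁻¹ * a, by rw [mul_assoc s a, mia']⟩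
    · exact ⟨a * a⁻¹, s, by rw [mia'']⟩
    · exact ⟨s, u, h⟩
  · rintro ⟨s, u, h⟩
    exact Or.inr ⟨s, u, h⟩

lemma mem_Idl_left {a x s : S} (h : s * a = x) : x ∈ Idl a :=
  Or.inl (Or.inl (Or.inr ⟨s, h⟩))

lemma mem_Idl_right {a x s : S} (h : a * s = x) : x ∈ Idl a :=
  Or.inl (Or.inr ⟨s, h⟩)

lemma Idl_mono {a b : S} (hb : b ∈ Idl a) : Idl b ⊆ Idl a := by
  intro x hx
  rw [mem_Idl] at hb hx ⊢
  obtain ⟨s, u, h1⟩ := hb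
  obtain ⟨v, w, h2⟩ := hx
  exact ⟨v * s, u * w, by rw [← h2, ← h1]; simp only [mul_assoc]⟩

lemma Jrel_of {a b : S} (hb : b ∈ Idl a) (ha : a ∈ Idl b) : Jrel a b :=
  Set.Subset.antisymm (Idl_mono ha) (Idl_mono hb)

def lprod {S' : Type*} [Mul S'] (h : S') (l : List S') : S' := l.foldl (· * ·) h

lemma lp_nil (h : S) : lprod h ([] : List S) = h := rfl

lemma lp_cons (h z : S) (l : List S) : lprod h (z :: l) = lprod (h * z) l := rfl

lemma lp_mul (c h : S) (l : List S) : lprod (c * h) l = c * lprod h l := by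
  induction l generalizing h with
  | nil => rfl
  | cons z l ih => rw [lp_cons, lp_cons, mul_assoc, ih]

lemma lp_cons' (h z : S) (l : List S) : lprod h (z :: l) = h * lprod z l := by
  rw [lp_cons, lp_mul]

lemma lp_append (h : S) (l1 l2 : List S) :
    lprod h (l1 ++ l2) = lprod (lprod h l1) l2 := by
  unfold lprod; rw [List.foldl_append]

lemma lp_concat (h z : S) (l : List S) : lprod h (l ++ [z]) = lprod h l * z := by
  unfold lprod; rw [List.foldl_append]; rfl

def GoodL {S' : Type*} [Mul S'] [Inv S'] (X : Set S') (z : S') : Prop :=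
  z ∈ X ∨ ∃ x ∈ X, z = x⁻¹

lemma good_inv {X : Set S} {z : S} (h : GoodL X z) : GoodL X z⁻¹ := by
  rcases h with h | ⟨x, hx, rfl⟩
  · exact Or.inr ⟨z, h, rfl⟩
  · exact Or.inl (by rw [inv2]; exact hx)

lemma gen_of_good {X : Set S} {z : S} (h : GoodL X z) : InvGen X z := by
  rcases h with h | ⟨x, hx, rfl⟩
  · exact .base h
  · exact .inv (.base hx)

lemma word_inv {X : Set S} : ∀ (l : List S) (h : S), GoodL X h → (∀ z ∈ l, GoodL X z) →
    ∃ h' l', GoodL X h' ∧ (∀ z ∈ l', GoodL X z) ∧ (lprod h l)⁻¹ = lprod h' l' := by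
  intro l
  induction l using List.reverseRecOn with
  | nil => exact fun h gh _ => ⟨h⁻¹, [], good_inv gh, by simp, rfl⟩
  | append_singleton l z ih =>
    intro h gh gl
    obtain ⟨h', l', gh', gl', heq⟩ := ih h gh (fun w hw => gl w (by simp [hw]))
    refine ⟨z⁻¹, h' :: l', good_inv (gl z (by simp)), ?_, ?_⟩
    · intro w hw
      rcases List.mem_cons.mp hw with rfl | hw
      · exact gh'
      · exact gl' w hw
    · rw [lp_concat, mir, heq, lp_cons']

lemma exists_word {X : Set S} {t : S} (h : InvGen X t) :
    ∃ h' l, GoodL X h' ∧ (∀ z ∈ l, GoodL X z) ∧ t = lprod h' l := by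
  induction h with
  | base hx => exact ⟨_, [], Or.inl hx, by simp, rfl⟩
  | mul ha hb iha ihb =>
    obtain ⟨h1, l1, g1, gl1, rfl⟩ := iha
    obtain ⟨h2, l2, g2, gl2, rfl⟩ := ihb
    refine ⟨h1, l1 ++ h2 :: l2, g1, ?_, ?_⟩
    · intro z hz
      rcases List.mem_append.mp hz with hz | hz
      · exact gl1 z hz
      · rcases List.mem_cons.mp hz with rfl | hz
        · exact g2
        · exact gl2 z hz
    · rw [lp_append, lp_cons, lp_mul]
  | inv ha ih =>
    obtain ⟨h1, l1, g1, gl1, rfl⟩ := ih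
    obtain ⟨h', l', gh', gl', heq⟩ := word_inv l1 h1 g1 gl1
    exact ⟨h', l', gh', gl', heq⟩

lemma mem_inv_Idl (c : S) : c⁻¹ ∈ Idl c :=
  mem_Idl.mpr ⟨c⁻¹, c⁻¹, by rw [mul_assoc]; exact imi' c⟩

lemma mem_Idl_inv (c : S) : c ∈ Idl c⁻¹ :=
  mem_Idl.mpr ⟨c, c, mia'' c⟩

lemma letter {X : Set S} {a t p z : S} (hJt : Idl a = Idl t) (hz : GoodL X z)
    (hp : InvGen X p) (hpI : p ∈ Idl t) (htI : t ∈ Idl (p⁻¹ * p * z)) :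
    InvGen (({y | ∃ e ∈ {e : S | e * e = e} ∩ Jcl a, ∃ x ∈ X, y = e * x} :
      Set S) ∩ {s | InvGen X s} ∩ Jcl a) (p⁻¹ * p * z) := by
  have hfi : (p⁻¹ * p) * (p⁻¹ * p) = p⁻¹ * p := proj2_idem p
  have hfIdl : p⁻¹ * p ∈ Idl t := by
    rw [mem_Idl] at hpI ⊢
    obtain ⟨s, u, hsu⟩ := hpI
    exact ⟨p⁻¹ * s, u, by rw [← hsu]; simp only [mul_assoc]⟩
  have hyIdl : p⁻¹ * p * z ∈ Idl t := by
    rw [mem_Idl] at hfIdl ⊢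
    obtain ⟨s, u, hsu⟩ := hfIdl
    exact ⟨s, u * z, by rw [← mul_assoc, hsu]⟩
  have htf : t ∈ Idl (p⁻¹ * p) := by
    refine Idl_mono (mem_Idl_right (s := z) rfl) htI
  have hfJ : Idl a = Idl (p⁻¹ * p) := hJt.trans (Jrel_of hfIdl htf)
  have hyJ : Idl a = Idl (p⁻¹ * p * z) := hJt.trans (Jrel_of hyIdl htI)
  have hyT : InvGen X (p⁻¹ * p * z) := .mul (.mul (.inv hp) hp) (gen_of_good hz)
  rcases hz with hzX | ⟨x, hx, rfl⟩
  · exact .base ⟨⟨⟨p⁻¹ * p, ⟨hfi, hfJ⟩, z, hzX, rfl⟩, hyT⟩, hyJ⟩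
  · -- y = (p⁻¹*p) * x⁻¹, w := x * (p⁻¹*p)
    have hfx : (p⁻¹ * p * x⁻¹)⁻¹ = x * (p⁻¹ * p) := by
      rw [mir, inv2, idem_inv hfi]
    have hwinv : (x * (p⁻¹ * p))⁻¹ = p⁻¹ * p * x⁻¹ := by
      rw [mir, idem_inv hfi]
    have hcomm : (p⁻¹ * p) * (x⁻¹ * x) = (x⁻¹ * x) * (p⁻¹ * p) :=
      idem_comm' hfi (proj2_idem x)
    have hgx : (x * (p⁻¹ * p)) * ((x * (p⁻¹ * p))⁻¹) * x = x * (p⁻¹ * p) := by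
      rw [hwinv]
      calc (x * (p⁻¹ * p)) * (p⁻¹ * p * x⁻¹) * x
          = x * ((p⁻¹ * p) * ((p⁻¹ * p) * (x⁻¹ * x))) := by simp only [mul_assoc]
      _ = x * ((p⁻¹ * p) * (x⁻¹ * x)) := by rw [← mul_assoc (p⁻¹ * p), hfi]
      _ = x * ((x⁻¹ * x) * (p⁻¹ * p)) := by rw [hcomm]
      _ = (x * (x⁻¹ * x)) * (p⁻¹ * p) := by rw [← mul_assoc]
      _ = x * (p⁻¹ * p) := by rw [mia']
    have hwT : InvGen X (x * (p⁻¹ * p)) := by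
      have h5 : InvGen X ((p⁻¹ * p * x⁻¹)⁻¹) := .inv hyT
      rwa [hfx] at h5
    have hwJ : Idl a = Idl (x * (p⁻¹ * p)) := by
      rw [← hfx]
      exact hyJ.trans (Jrel_of (mem_inv_Idl _) (mem_Idl_inv _))
    set w := x * (p⁻¹ * p) with hwdef
    have hgidem : (w * w⁻¹) * (w * w⁻¹) = w * w⁻¹ := proj1_idem w
    have hgJ : Idl a = Idl (w * w⁻¹) := by
      refine hwJ.trans (Jrel_of (mem_Idl_right (s := w⁻¹) rfl) (mem_Idl.mpr ⟨w * w⁻¹, w, ?_⟩))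
      rw [hgidem]
      exact mia'' w
    have hbase : InvGen (({y | ∃ e ∈ {e : S | e * e = e} ∩ Jcl a, ∃ x ∈ X, y = e * x} :
        Set S) ∩ {s | InvGen X s} ∩ Jcl a) w :=
      .base ⟨⟨⟨w * w⁻¹, ⟨hgidem, hgJ⟩, x, hx, hgx.symm⟩, hwT⟩, hwJ⟩
    have h6 := InvGen.inv hbase
    rwa [hwinv] at h6

lemma auxmain {X : Set S} {a t : S} (hJt : Idl a = Idl t) :
    ∀ (l : List S) (h p : S), GoodL X h → (∀ z ∈ l, GoodL X z) →
      InvGen X p → p ∈ Idl t → p * lprod h l = t →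
      InvGen (({y | ∃ e ∈ {e : S | e * e = e} ∩ Jcl a, ∃ x ∈ X, y = e * x} :
        Set S) ∩ {s | InvGen X s} ∩ Jcl a) (p⁻¹ * t) := by
  intro l
  induction l with
  | nil =>
    intro h p gh _ hp hpI heq
    have h1 : p⁻¹ * t = p⁻¹ * p * h := by
      rw [← heq]
      show p⁻¹ * (p * h) = p⁻¹ * p * h
      rw [mul_assoc]
    rw [h1]
    refine letter hJt gh hp hpI (mem_Idl_left (s := p) ?_)
    rw [← heq]
    show p * (p⁻¹ * p * h) = p * h
    rw [← mul_assoc, ← mul_assoc, mia'']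
  | cons z l ih =>
    intro h p gh gl hp hpI heq
    rw [lp_cons'] at heq
    have heq' : (p * h) * lprod z l = t := by rw [mul_assoc]; exact heq
    have hp' : InvGen X (p * h) := .mul hp (gen_of_good gh)
    have hp'I : p * h ∈ Idl t := by
      rw [mem_Idl] at hpI ⊢
      obtain ⟨s, u, hsu⟩ := hpI
      exact ⟨s, u * h, by rw [← mul_assoc, hsu]⟩
    have h1 := letter (a := a) hJt gh hp hpI (mem_Idl.mpr ⟨p, lprod z l, by
      rw [← heq']
      congr 1
      rw [← mul_assoc, ← mul_assoc, mia'']⟩)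
    have h2 := ih z (p * h) (gl z List.mem_cons_self)
      (fun w hw => gl w (List.mem_cons_of_mem z hw)) hp' hp'I heq'
    have key : p⁻¹ * t = (p⁻¹ * p * h) * ((p * h)⁻¹ * t) := by
      conv_rhs => rw [← heq']
      calc p⁻¹ * t = p⁻¹ * ((p * h) * lprod z l) := by rw [heq']
      _ = p⁻¹ * ((p * h) * ((p * h)⁻¹ * ((p * h) * lprod z l))) := by rw [mia_ext]
      _ = (p⁻¹ * (p * h)) * ((p * h)⁻¹ * ((p * h) * lprod z l)) := by simp only [mul_assoc]
      _ = (p⁻¹ * p * h) * ((p * h)⁻¹ * ((p * h) * lprod z l)) := by rw [mul_assoc p⁻¹ p h]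
    rw [key]
    exact .mul h1 h2

end AuxIS

theorem stmt_2 {S : Type*} [InverseSemigroup S] (X : Set S) (a : S) :
    ∀ t : S, InvGen X t → t ∈ Jcl a →
      InvGen (({y | ∃ e ∈ {e : S | e * e = e} ∩ Jcl a, ∃ x ∈ X, y = e * x} :
        Set S) ∩ {s | InvGen X s} ∩ Jcl a) t := by
  intro t ht hJ
  obtain ⟨h, l, gh, gl, heqw⟩ := exists_word ht
  have hp : InvGen X (t * t⁻¹) := .mul ht (.inv ht)
  have hpI : t * t⁻¹ ∈ Idl t := mem_Idl_right rfl
  have heq : (t * t⁻¹) * lprod h l = t := by rw [← heqw]; exact mia'' t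
  have hmain := auxmain (X := X) (a := a) hJ l h (t * t⁻¹) gh gl hp hpI heq
  have hsimp : (t * t⁻¹)⁻¹ * t = t := by
    rw [idem_inv (proj1_idem t), mul_assoc, mia']
  rwa [hsimp] at hmain
end

section
/- Let S be an inverse semigroup with finitely many idempotents. Then S has the Howson property if and only if every maximal subgroup of S (i.e., every group ℋ-class H_e for an idempotent e) has the Howson property. -/
/-- The Howson property for an inverse subsemigroup `H` (in particular for a
maximal subgroup, regarded as an inverse semigroup). -/
def HowsonOn {S : Type*} [Mul S] [Inv S] (H : Set S) : Prop :=
  ∀ U V : Set S, U ⊆ H → V ⊆ H → IsInvSub U → IsInvSub V → InvFG U → InvFG V → InvFG (U ∩ V)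

namespace IS
variable {S : Type*} [InverseSemigroup S]

lemma mim (a : S) : a * a⁻¹ * a = a := InverseSemigroup.mul_inv_mul a
lemma invinv (a : S) : a⁻¹⁻¹ = a := InverseSemigroup.inv_invol a
lemma icomm (a b : S) : a * a⁻¹ * (b * b⁻¹) = b * b⁻¹ * (a * a⁻¹) :=
  InverseSemigroup.idem_comm a b

lemma imi (a : S) : a⁻¹ * a * a⁻¹ = a⁻¹ := by
  have := mim a⁻¹; rwa [invinv] at this

lemma fidem (a : S) : a * a⁻¹ * (a * a⁻¹) = a * a⁻¹ := by
  rw [← mul_assoc, mim]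

lemma gidem (a : S) : a⁻¹ * a * (a⁻¹ * a) = a⁻¹ * a := by
  have := fidem a⁻¹; rwa [invinv] at this

/-- commutation of `a⁻¹a` with `b*b⁻¹` etc. -/
lemma icomm' (a b : S) : a⁻¹ * a * (b * b⁻¹) = b * b⁻¹ * (a⁻¹ * a) := by
  have := icomm a⁻¹ b; rwa [invinv] at this

lemma icomm'' (a b : S) : a⁻¹ * a * (b⁻¹ * b) = b⁻¹ * b * (a⁻¹ * a) := by
  have := icomm a⁻¹ b⁻¹; rwa [invinv, invinv] at this

/-- For idempotent e, e⁻¹ = (e⁻¹ * e) * (e * e⁻¹). -/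
private lemma inv_decomp (e : S) (he : e * e = e) : e⁻¹ = e⁻¹ * e * (e * e⁻¹) := by
  calc e⁻¹ = e⁻¹ * e * e⁻¹ := (imi e).symm
    _ = e⁻¹ * (e * e) * e⁻¹ := by rw [he]
    _ = e⁻¹ * e * (e * e⁻¹) := by simp only [mul_assoc]

lemma idem_inv (e : S) (he : e * e = e) : e⁻¹ = e := by
  have hcomm : e⁻¹ * e * (e * e⁻¹) = e * e⁻¹ * (e⁻¹ * e) := icomm' e e
  -- e⁻¹ is idempotent
  have hi : e⁻¹ * e⁻¹ = e⁻¹ := by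
    have h1 : e⁻¹ = e⁻¹ * e * (e * e⁻¹) := inv_decomp e he
    calc e⁻¹ * e⁻¹ = e⁻¹ * e * (e * e⁻¹) * (e⁻¹ * e * (e * e⁻¹)) := by rw [← h1]
      _ = e⁻¹ * e * (e * e⁻¹ * (e⁻¹ * e) * (e * e⁻¹)) := by simp only [mul_assoc]
      _ = e⁻¹ * e * (e⁻¹ * e * (e * e⁻¹) * (e * e⁻¹)) := by rw [hcomm]
      _ = e⁻¹ * e * (e⁻¹ * e * (e * e⁻¹ * (e * e⁻¹))) := by simp only [mul_assoc]
      _ = e⁻¹ * e * (e⁻¹ * e * (e * e⁻¹)) := by rw [fidem]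
      _ = e⁻¹ * e * (e⁻¹ * e) * (e * e⁻¹) := by simp only [mul_assoc]
      _ = e⁻¹ * e * (e * e⁻¹) := by rw [gidem]
      _ = e⁻¹ := h1.symm
  have h2 : e = e * e⁻¹ * (e⁻¹ * e) := by
    have := inv_decomp e⁻¹ hi; rwa [invinv] at this
  symm
  calc e = e * e⁻¹ * (e⁻¹ * e) := h2
    _ = e⁻¹ * e * (e * e⁻¹) := hcomm.symm
    _ = e⁻¹ := (inv_decomp e he).symm

lemma idem_mul_inv (e : S) (he : e * e = e) : e * e⁻¹ = e := by rw [idem_inv e he, he]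
lemma idem_inv_mul (e : S) (he : e * e = e) : e⁻¹ * e = e := by rw [idem_inv e he, he]

lemma idem_comm (e f : S) (he : e * e = e) (hf : f * f = f) : e * f = f * e := by
  have := icomm e f
  rwa [idem_mul_inv e he, idem_mul_inv f hf] at this

lemma mul_inv_rev (a b : S) : (a * b)⁻¹ = b⁻¹ * a⁻¹ := by
  set x := a * b with hx
  set w := (a * b)⁻¹ with hwdef
  set v := b⁻¹ * a⁻¹ with hv
  have hxwx : x * w * x = x := mim x
  have hwxw : w * x * w = w := imi x
  have hxvx : x * v * x = x := by
    calc x * v * x = a * (b * b⁻¹ * (a⁻¹ * a)) * b := by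
          simp only [hx, hv, mul_assoc]
      _ = a * (a⁻¹ * a * (b * b⁻¹)) * b := by rw [icomm' a b]
      _ = a * a⁻¹ * a * (b * b⁻¹ * b) := by simp only [mul_assoc]
      _ = a * b := by rw [mim, mim]
  have hvxv : v * x * v = v := by
    calc v * x * v = b⁻¹ * (a⁻¹ * a * (b * b⁻¹)) * a⁻¹ := by
          simp only [hx, hv, mul_assoc]
      _ = b⁻¹ * (b * b⁻¹ * (a⁻¹ * a)) * a⁻¹ := by rw [icomm' a b]
      _ = b⁻¹ * b * b⁻¹ * (a⁻¹ * a * a⁻¹) := by simp only [mul_assoc]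
      _ = b⁻¹ * a⁻¹ := by rw [imi, imi]
  -- idempotents
  have hwx : w * x * (w * x) = w * x := by
    calc w * x * (w * x) = w * (x * w * x) := by simp only [mul_assoc]
      _ = w * x := by rw [hxwx]
  have hvx : v * x * (v * x) = v * x := by
    calc v * x * (v * x) = v * (x * v * x) := by simp only [mul_assoc]
      _ = v * x := by rw [hxvx]
  have hxw : x * w * (x * w) = x * w := by
    calc x * w * (x * w) = x * (w * x * w) := by simp only [mul_assoc]
      _ = x * w := by rw [hwxw]
  have hxv : x * v * (x * v) = x * v := by
    calc x * v * (x * v) = x * (v * x * v) := by simp only [mul_assoc]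
      _ = x * v := by rw [hvxv]
  have c1 : w * x * (v * x) = v * x * (w * x) := idem_comm _ _ hwx hvx
  have c2 : x * w * (x * v) = x * v * (x * w) := idem_comm _ _ hxw hxv
  have hw_eq : w = v * x * w := by
    calc w = w * x * w := hwxw.symm
      _ = w * (x * v * x) * w := by rw [hxvx]
      _ = w * x * (v * x) * w := by simp only [mul_assoc]
      _ = v * x * (w * x) * w := by rw [c1]
      _ = v * x * (w * x * w) := by simp only [mul_assoc]
      _ = v * x * w := by rw [hwxw]
  have hv_eq : v = v * x * w := by
    calc v = v * x * v := hvxv.symm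
      _ = v * (x * w * x) * v := by rw [hxwx]
      _ = v * (x * w * (x * v)) := by simp only [mul_assoc]
      _ = v * (x * v * (x * w)) := by rw [c2]
      _ = v * x * v * (x * w) := by simp only [mul_assoc]
      _ = v * (x * w) := by rw [hvxv]
      _ = v * x * w := (mul_assoc v x w).symm
  exact hw_eq.trans hv_eq.symm

end IS

namespace IS
variable {S : Type*} [InverseSemigroup S]

lemma muu (u : S) : u * (u⁻¹ * u) = u := by rw [← mul_assoc, mim]
lemma uum (u : S) : u⁻¹ * (u * u⁻¹) = u⁻¹ := by rw [← mul_assoc, imi]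

lemma ru_inv_e {u e : S} (h : u * u⁻¹ = e) : u⁻¹ * e = u⁻¹ := by rw [← h, uum]
lemma e_ru {u e : S} (h : u * u⁻¹ = e) : e * u = u := by rw [← h, mul_assoc, muu]
lemma lu_e {u e : S} (h : u⁻¹ * u = e) : u * e = u := by rw [← h, muu]
lemma e_lu {u e : S} (h : u⁻¹ * u = e) : e * u⁻¹ = u⁻¹ := by
  rw [← h, mul_assoc, ← mul_assoc, imi]

/-- if u,v lie in the `R`-class of `e` and have the same right idempotent, then
`u * v⁻¹` lies in the maximal subgroup at `e`. -/
lemma quot {u v e : S} (hu : u * u⁻¹ = e) (hv : v * v⁻¹ = e) (huv : u⁻¹ * u = v⁻¹ * v) :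
    (u * v⁻¹) * (u * v⁻¹)⁻¹ = e ∧ (u * v⁻¹)⁻¹ * (u * v⁻¹) = e := by
  constructor
  · calc u * v⁻¹ * (u * v⁻¹)⁻¹ = u * v⁻¹ * (v⁻¹⁻¹ * u⁻¹) := by rw [mul_inv_rev]
      _ = u * v⁻¹ * (v * u⁻¹) := by rw [invinv]
      _ = u * (v⁻¹ * v) * u⁻¹ := by simp only [mul_assoc]
      _ = u * (u⁻¹ * u) * u⁻¹ := by rw [huv]
      _ = u * u⁻¹ := by rw [muu]
      _ = e := hu
  · calc (u * v⁻¹)⁻¹ * (u * v⁻¹) = v⁻¹⁻¹ * u⁻¹ * (u * v⁻¹) := by rw [mul_inv_rev]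
      _ = v * u⁻¹ * (u * v⁻¹) := by rw [invinv]
      _ = v * (u⁻¹ * u) * v⁻¹ := by simp only [mul_assoc]
      _ = v * (v⁻¹ * v) * v⁻¹ := by rw [huv]
      _ = v * v⁻¹ := by rw [muu]
      _ = e := hv

lemma Hmul {a b e : S} (ha1 : a * a⁻¹ = e) (ha2 : a⁻¹ * a = e)
    (hb1 : b * b⁻¹ = e) (hb2 : b⁻¹ * b = e) :
    (a * b) * (a * b)⁻¹ = e ∧ (a * b)⁻¹ * (a * b) = e := by
  constructor
  · calc a * b * (a * b)⁻¹ = a * b * (b⁻¹ * a⁻¹) := by rw [mul_inv_rev]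
      _ = a * (b * b⁻¹) * a⁻¹ := by simp only [mul_assoc]
      _ = a * e * a⁻¹ := by rw [hb1]
      _ = a * a⁻¹ := by rw [lu_e ha2]
      _ = e := ha1
  · calc (a * b)⁻¹ * (a * b) = b⁻¹ * a⁻¹ * (a * b) := by rw [mul_inv_rev]
      _ = b⁻¹ * (a⁻¹ * a) * b := by simp only [mul_assoc]
      _ = b⁻¹ * e * b := by rw [ha2]
      _ = b⁻¹ * b := by rw [ru_inv_e hb1]
      _ = e := hb2

/-- conjugation lemma: if ε ≤ e is conjugated to e by a member of H_e, then ε = e. -/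
lemma conj_eq {h ε e : S} (hh1 : h * h⁻¹ = e) (hh2 : h⁻¹ * h = e)
    (hεe : ε * e = ε) (heε : e * ε = ε) (hc : h * ε * h⁻¹ = e) : ε = e := by
  calc ε = e * ε * e := by rw [heε, hεe]
    _ = h⁻¹ * h * ε * (h⁻¹ * h) := by rw [hh2]
    _ = h⁻¹ * (h * ε * h⁻¹) * h := by simp only [mul_assoc]
    _ = h⁻¹ * e * h := by rw [hc]
    _ = h⁻¹ * h := by rw [ru_inv_e hh1]
    _ = e := hh2

lemma isInvSub_H {T : Set S} (hT : IsInvSub T) (e : S) :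
    IsInvSub {s | s ∈ T ∧ s * s⁻¹ = e ∧ s⁻¹ * s = e} := by
  constructor
  · rintro a ⟨haT, ha1, ha2⟩ b ⟨hbT, hb1, hb2⟩
    exact ⟨hT.1 a haT b hbT, (Hmul ha1 ha2 hb1 hb2).1, (Hmul ha1 ha2 hb1 hb2).2⟩
  · rintro a ⟨haT, ha1, ha2⟩
    exact ⟨hT.2 a haT, by rwa [invinv], by rwa [invinv]⟩

lemma invGen_mono {X Y : Set S} (hXY : X ⊆ Y) {s : S} (h : InvGen X s) : InvGen Y s := by
  induction h with
  | base hx => exact InvGen.base (hXY hx)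
  | mul _ _ iha ihb => exact InvGen.mul iha ihb
  | inv _ ih => exact InvGen.inv ih

lemma invGen_mem {X T : Set S} (hXT : X ⊆ T) (hT : IsInvSub T) {s : S}
    (h : InvGen X s) : s ∈ T := by
  induction h with
  | base hx => exact hXT hx
  | mul _ _ iha ihb => exact hT.1 _ iha _ ihb
  | inv _ ih => exact hT.2 _ ih

/-- right-extendable words over a set of letters -/
inductive RW (W : Set S) : S → Prop
  | base {x : S} : x ∈ W → RW W x
  | step {s x : S} : RW W s → x ∈ W → RW W (s * x)

lemma RW.mul {W : Set S} {a b : S} (ha : RW W a) (hb : RW W b) : RW W (a * b) := by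
  induction hb with
  | base hx => exact RW.step ha hx
  | step _ hx ih => rw [← mul_assoc]; exact RW.step ih hx

lemma RW.inv {W : Set S} (hW : ∀ x ∈ W, x⁻¹ ∈ W) {a : S} (ha : RW W a) : RW W a⁻¹ := by
  induction ha with
  | base hx => exact RW.base (hW _ hx)
  | step _ hx ih => rw [mul_inv_rev]; exact RW.mul (RW.base (hW _ hx)) ih

lemma rw_iff_invGen {X : Set S} {W : Set S} (hXW : X ⊆ W)
    (hWX : ∀ x ∈ W, InvGen X x) (hW : ∀ x ∈ W, x⁻¹ ∈ W) {t : S} :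
    InvGen X t ↔ RW W t := by
  constructor
  · intro h
    induction h with
    | base hx => exact RW.base (hXW hx)
    | mul _ _ iha ihb => exact RW.mul iha ihb
    | inv _ ih => exact RW.inv hW ih
  · intro h
    induction h with
    | base hx => exact hWX _ hx
    | step _ hx ih => exact InvGen.mul ih (hWX _ hx)

end IS

namespace IS
variable {S : Type*} [InverseSemigroup S]

/-- the states: idempotents `f` such that some `u ∈ T` has `u * u⁻¹ = e` and `u⁻¹ * u = f`. -/
def FPd (T : Set S) (e f : S) : Prop := ∃ u, u ∈ T ∧ u * u⁻¹ = e ∧ u⁻¹ * u = f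

open Classical in
/-- representative choice -/
noncomputable def rho (T : Set S) (e f : S) : S :=
  if f = e then e else if h : FPd T e f then h.choose else e

lemma rho_e (T : Set S) (e : S) : rho T e e = e := by simp [rho]

lemma rho_spec {T : Set S} {e : S} (heT : e ∈ T) (hee : e * e = e) (f : S)
    (hf : FPd T e f) : rho T e f ∈ T ∧ rho T e f * (rho T e f)⁻¹ = e ∧
      (rho T e f)⁻¹ * rho T e f = f := by
  by_cases hfe : f = e
  · subst hfe
    rw [rho_e]
    exact ⟨heT, idem_mul_inv _ hee, idem_inv_mul _ hee⟩
  · have hch : rho T e f = hf.choose := by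
      simp only [rho, if_neg hfe, dif_pos hf]
    rw [hch]
    exact hf.choose_spec

lemma FPd_idem {T : Set S} {e f : S} (hf : FPd T e f) : f * f = f := by
  obtain ⟨u, _, _, hu⟩ := hf
  rw [← hu]; exact gidem u

/-- the Schreier generator associated to a pair (state, letter) -/
noncomputable def zed (T : Set S) (e : S) (p : S × S) : S :=
  rho T e p.1 * p.2 * (rho T e (p.2⁻¹ * (p.1 * p.2)))⁻¹

theorem subgroup_fg (hE : {e : S | e * e = e}.Finite)
    {T : Set S} (hT : IsInvSub T) (hfg : InvFG T) {e : S} (heT : e ∈ T) (hee : e * e = e) :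
    InvFG {s | s ∈ T ∧ s * s⁻¹ = e ∧ s⁻¹ * s = e} := by
  classical
  obtain ⟨X, hXT, hXgen⟩ := hfg
  have hmemT : ∀ t : S, t ∈ T ↔ InvGen (↑X : Set S) t := by
    intro t
    constructor
    · intro ht; rw [hXgen] at ht; exact ht
    · intro ht; rw [hXgen]; exact ht
  set W : Finset S := X ∪ X.image (·⁻¹) with hWdef
  have hXW : (↑X : Set S) ⊆ (↑W : Set S) := by
    intro x hx
    simp only [hWdef, Finset.coe_union, Set.mem_union]
    exact Or.inl hx
  have hWgen : ∀ x ∈ (↑W : Set S), InvGen (↑X : Set S) x := by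
    intro x hx
    rcases Finset.mem_union.mp (by exact_mod_cast hx) with h | h
    · exact InvGen.base (by exact_mod_cast h)
    · obtain ⟨y, hy, hyx⟩ := Finset.mem_image.mp h
      rw [← hyx]
      exact InvGen.inv (InvGen.base (by exact_mod_cast hy))
  have hWinv : ∀ x ∈ (↑W : Set S), x⁻¹ ∈ (↑W : Set S) := by
    intro x hx
    rcases Finset.mem_union.mp (by exact_mod_cast hx) with h | h
    · have : x⁻¹ ∈ X.image (·⁻¹) := Finset.mem_image.mpr ⟨x, h, rfl⟩
      exact_mod_cast Finset.mem_union.mpr (Or.inr this)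
    · obtain ⟨y, hy, hyx⟩ := Finset.mem_image.mp h
      have : x⁻¹ = y := by rw [← hyx]; exact invinv y
      rw [this]
      exact_mod_cast Finset.mem_union.mpr (Or.inl hy)
  have hWT : ∀ x ∈ (↑W : Set S), x ∈ T := fun x hx => (hmemT x).mpr (hWgen x hx)
  have hei : e⁻¹ = e := idem_inv e hee
  have hee' : e * e⁻¹ = e := idem_mul_inv e hee
  have hee'' : e⁻¹ * e = e := idem_inv_mul e hee
  set Z : Finset S := insert e (((hE.toFinset ×ˢ W).filter
      (fun p => FPd T e p.1 ∧ (rho T e p.1 * p.2) * (rho T e p.1 * p.2)⁻¹ = e)).image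
      (zed T e)) with hZdef
  -- basic facts about each Schreier generator
  have hbasic : ∀ f x : S, FPd T e f → x ∈ (↑W : Set S) →
      (rho T e f * x) * (rho T e f * x)⁻¹ = e →
      FPd T e (x⁻¹ * (f * x)) ∧ zed T e (f, x) ∈ T ∧
      zed T e (f, x) * (zed T e (f, x))⁻¹ = e ∧ (zed T e (f, x))⁻¹ * zed T e (f, x) = e ∧
      (rho T e f * x)⁻¹ * (rho T e f * x) = x⁻¹ * (f * x) ∧
      zed T e (f, x) * rho T e (x⁻¹ * (f * x)) = rho T e f * x := by
    intro f x hf hx hcnd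
    obtain ⟨hfT, hf1, hf2⟩ := rho_spec heT hee f hf
    have huT : rho T e f * x ∈ T := hT.1 _ hfT _ (hWT x hx)
    have hu2 : (rho T e f * x)⁻¹ * (rho T e f * x) = x⁻¹ * (f * x) := by
      calc (rho T e f * x)⁻¹ * (rho T e f * x)
          = x⁻¹ * (rho T e f)⁻¹ * (rho T e f * x) := by rw [mul_inv_rev]
        _ = x⁻¹ * ((rho T e f)⁻¹ * rho T e f * x) := by simp only [mul_assoc]
        _ = x⁻¹ * (f * x) := by rw [hf2]
    have hf' : FPd T e (x⁻¹ * (f * x)) := ⟨_, huT, hcnd, hu2⟩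
    obtain ⟨hT', h1', h2'⟩ := rho_spec heT hee _ hf'
    have hq := quot hcnd h1' (by rw [hu2, h2'])
    have hzeq : zed T e (f, x) = rho T e f * x * (rho T e (x⁻¹ * (f * x)))⁻¹ := rfl
    refine ⟨hf', ?_, ?_, ?_, hu2, ?_⟩
    · rw [hzeq]; exact hT.1 _ huT _ (hT.2 _ hT')
    · rw [hzeq]; exact hq.1
    · rw [hzeq]; exact hq.2
    · rw [hzeq]
      calc rho T e f * x * (rho T e (x⁻¹ * (f * x)))⁻¹ * rho T e (x⁻¹ * (f * x))
          = rho T e f * x * ((rho T e (x⁻¹ * (f * x)))⁻¹ * rho T e (x⁻¹ * (f * x))) := by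
            simp only [mul_assoc]
        _ = rho T e f * x * (x⁻¹ * (f * x)) := by rw [h2']
        _ = rho T e f * x * ((rho T e f * x)⁻¹ * (rho T e f * x)) := by rw [hu2]
        _ = rho T e f * x := muu _
  -- the extension step
  have extend : ∀ h f x : S, InvGen (↑Z : Set S) h → h * h⁻¹ = e → h⁻¹ * h = e →
      FPd T e f → x ∈ (↑W : Set S) →
      (h * rho T e f * x) * (h * rho T e f * x)⁻¹ = e →
      ∃ h' f', InvGen (↑Z : Set S) h' ∧ h' * h'⁻¹ = e ∧ h'⁻¹ * h' = e ∧ FPd T e f' ∧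
        h * rho T e f * x = h' * rho T e f' ∧
        (h * rho T e f * x)⁻¹ * (h * rho T e f * x) = f' := by
    intro h f x hInv hh1 hh2 hf hx hu'
    obtain ⟨hfT, hf1, hf2⟩ := rho_spec heT hee f hf
    set u : S := rho T e f * x with hudef
    have hconj : h * (u * u⁻¹) * h⁻¹ = e := by
      calc h * (u * u⁻¹) * h⁻¹ = h * u * (u⁻¹ * h⁻¹) := by simp only [mul_assoc]
        _ = h * u * (h * u)⁻¹ := by rw [mul_inv_rev h u]
        _ = (h * rho T e f * x) * (h * rho T e f * x)⁻¹ := by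
            simp only [hudef, mul_assoc]
        _ = e := hu'
    have hεe : (u * u⁻¹) * e = u * u⁻¹ := by
      calc (u * u⁻¹) * e = u * (u⁻¹ * e) := mul_assoc _ _ _
        _ = u * (u⁻¹ * (rho T e f * (rho T e f)⁻¹)) := by rw [hf1]
        _ = u * (x⁻¹ * (rho T e f)⁻¹ * (rho T e f * (rho T e f)⁻¹)) := by
            rw [hudef, mul_inv_rev]
        _ = u * (x⁻¹ * ((rho T e f)⁻¹ * (rho T e f * (rho T e f)⁻¹))) := by
            simp only [mul_assoc]
        _ = u * (x⁻¹ * (rho T e f)⁻¹) := by rw [uum]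
        _ = u * u⁻¹ := by rw [hudef, mul_inv_rev]
    have heε : e * (u * u⁻¹) = u * u⁻¹ := by
      rw [idem_comm e (u * u⁻¹) hee (fidem u)]
      exact hεe
    have hcnd : u * u⁻¹ = e := conj_eq hh1 hh2 hεe heε hconj
    obtain ⟨hf', hzT, hz1, hz2, hu2, hdec⟩ := hbasic f x hf hx hcnd
    have hfE : f ∈ hE.toFinset := by
      rw [Set.Finite.mem_toFinset]
      exact FPd_idem hf
    have hxW : x ∈ W := by exact_mod_cast hx
    have hzZ : zed T e (f, x) ∈ (↑Z : Set S) := by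
      rw [hZdef]
      push_cast
      apply Set.mem_insert_of_mem
      refine Set.mem_image_of_mem _ ?_
      exact ⟨Finset.mem_product.mpr ⟨hfE, hxW⟩, hf, hcnd⟩
    refine ⟨h * zed T e (f, x), x⁻¹ * (f * x), InvGen.mul hInv (InvGen.base hzZ),
      (Hmul hh1 hh2 hz1 hz2).1, (Hmul hh1 hh2 hz1 hz2).2, hf', ?_, ?_⟩
    · calc h * rho T e f * x = h * u := by rw [hudef, mul_assoc]
        _ = h * (zed T e (f, x) * rho T e (x⁻¹ * (f * x))) := by rw [hdec]
        _ = h * zed T e (f, x) * rho T e (x⁻¹ * (f * x)) := (mul_assoc _ _ _).symm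
    · calc (h * rho T e f * x)⁻¹ * (h * rho T e f * x)
          = (h * u)⁻¹ * (h * u) := by rw [hudef, mul_assoc]
        _ = u⁻¹ * h⁻¹ * (h * u) := by rw [mul_inv_rev h u]
        _ = u⁻¹ * (h⁻¹ * h) * u := by simp only [mul_assoc]
        _ = u⁻¹ * e * u := by rw [hh2]
        _ = u⁻¹ * u := by rw [ru_inv_e hcnd]
        _ = x⁻¹ * (f * x) := hu2
  -- the main induction
  have main : ∀ t : S, RW (↑W : Set S) t → e * (t * t⁻¹) = e →
      ∃ h f, InvGen (↑Z : Set S) h ∧ h * h⁻¹ = e ∧ h⁻¹ * h = e ∧ FPd T e f ∧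
        e * t = h * rho T e f ∧ (e * t)⁻¹ * (e * t) = f := by
    intro t ht
    induction ht with
    | @base x hx =>
      intro hle
      have hFPe : FPd T e e := ⟨e, heT, hee', hee''⟩
      have heZ : e ∈ (↑Z : Set S) := by
        rw [hZdef]; push_cast; exact Set.mem_insert _ _
      have harg : (e * rho T e e * x) * (e * rho T e e * x)⁻¹ = e := by
        rw [rho_e, hee]
        calc (e * x) * (e * x)⁻¹ = e * x * (x⁻¹ * e⁻¹) := by rw [mul_inv_rev]
          _ = e * (x * x⁻¹) * e⁻¹ := by simp only [mul_assoc]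
          _ = e * e⁻¹ := by rw [hle]
          _ = e := hee'
      obtain ⟨h', f', hi', hh1', hh2', hf', hdec', hlast'⟩ :=
        extend e e x (InvGen.base heZ) hee' hee'' hFPe hx harg
      refine ⟨h', f', hi', hh1', hh2', hf', ?_, ?_⟩
      · rw [← hdec', rho_e, hee]
      · rw [← hlast', rho_e, hee]
    | @step s x hs hx ih =>
      intro hle
      -- first, e * (s * s⁻¹) = e
      have hp : (s * x) * (s * x)⁻¹ = s * (x * x⁻¹) * s⁻¹ := by
        rw [mul_inv_rev]
        simp only [mul_assoc]
      have hpq : (s * (x * x⁻¹) * s⁻¹) * (s * s⁻¹) = s * (x * x⁻¹) * s⁻¹ := by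
        calc (s * (x * x⁻¹) * s⁻¹) * (s * s⁻¹)
            = s * (x * x⁻¹) * (s⁻¹ * s * s⁻¹) := by simp only [mul_assoc]
          _ = s * (x * x⁻¹) * s⁻¹ := by rw [imi]
      have hles : e * (s * s⁻¹) = e := by
        have h1 : e * (s * (x * x⁻¹) * s⁻¹) = e := by rw [← hp]; exact hle
        calc e * (s * s⁻¹) = e * (s * (x * x⁻¹) * s⁻¹) * (s * s⁻¹) := by rw [h1]
          _ = e * ((s * (x * x⁻¹) * s⁻¹) * (s * s⁻¹)) := by simp only [mul_assoc]
          _ = e * (s * (x * x⁻¹) * s⁻¹) := by rw [hpq]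
          _ = e := h1
      obtain ⟨h, f, hInv, hh1, hh2, hf, hdec, hlast⟩ := ih hles
      have harg : (h * rho T e f * x) * (h * rho T e f * x)⁻¹ = e := by
        have h1 : h * rho T e f * x = e * (s * x) := by
          rw [← hdec, mul_assoc]
        rw [h1]
        calc (e * (s * x)) * (e * (s * x))⁻¹
            = e * (s * x) * ((s * x)⁻¹ * e⁻¹) := by rw [mul_inv_rev]
          _ = e * ((s * x) * (s * x)⁻¹) * e⁻¹ := by simp only [mul_assoc]
          _ = e * e⁻¹ := by rw [hle]
          _ = e := hee'
      obtain ⟨h', f', hi', hh1', hh2', hf', hdec', hlast'⟩ :=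
        extend h f x hInv hh1 hh2 hf hx harg
      have hfix : h * rho T e f * x = e * (s * x) := by rw [← hdec, mul_assoc]
      refine ⟨h', f', hi', hh1', hh2', hf', ?_, ?_⟩
      · rw [← hdec', hfix]
      · rw [← hlast', hfix]
  -- conclude
  refine ⟨Z, ?_, ?_⟩
  · intro z hz
    rw [hZdef] at hz
    push_cast at hz
    rcases hz with hz | hz
    · rw [hz]
      exact ⟨heT, hee', hee''⟩
    · obtain ⟨p, hp, hpz⟩ := hz
      obtain ⟨hpmem, hpf, hpcnd⟩ := hp
      have hxW : p.2 ∈ (↑W : Set S) :=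
        Finset.mem_coe.mpr (Finset.mem_product.mp hpmem).2
      obtain ⟨_, hzT, hz1, hz2, _, _⟩ := hbasic p.1 p.2 hpf hxW hpcnd
      rw [← hpz]
      exact ⟨hzT, hz1, hz2⟩
  · ext s
    constructor
    · rintro ⟨hsT, hs1, hs2⟩
      have hrw : RW (↑W : Set S) s :=
        (rw_iff_invGen hXW hWgen hWinv).mp ((hmemT s).mp hsT)
      have hle : e * (s * s⁻¹) = e := by rw [hs1, hee]
      obtain ⟨h, f, hInv, hh1, hh2, hf, hdec, hlast⟩ := main s hrw hle
      have hes : e * s = s := e_ru hs1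
      have hfe : f = e := by
        rw [hes] at hlast
        rw [← hlast, hs2]
      rw [hes] at hdec
      rw [hfe, rho_e] at hdec
      rw [lu_e hh2] at hdec
      show InvGen (↑Z : Set S) s
      rw [hdec]
      exact hInv
    · intro hs
      exact invGen_mem (by
        intro z hz
        rw [hZdef] at hz
        push_cast at hz
        rcases hz with hz | hz
        · rw [hz]; exact ⟨heT, hee', hee''⟩
        · obtain ⟨p, hp, hpz⟩ := hz
          obtain ⟨hpmem, hpf, hpcnd⟩ := hp
          have hxW : p.2 ∈ (↑W : Set S) :=
            Finset.mem_coe.mpr (Finset.mem_product.mp hpmem).2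
          obtain ⟨_, hzT, hz1, hz2, _, _⟩ := hbasic p.1 p.2 hpf hxW hpcnd
          rw [← hpz]
          exact ⟨hzT, hz1, hz2⟩) (isInvSub_H hT e) hs

end IS

namespace IS
variable {S : Type*} [InverseSemigroup S]

theorem fg_of_subgroups (hE : {e : S | e * e = e}.Finite) {T : Set S} (hT : IsInvSub T)
    (h : ∀ e ∈ T, e * e = e → InvFG {s | s ∈ T ∧ s * s⁻¹ = e ∧ s⁻¹ * s = e}) :
    InvFG T := by
  classical
  set P : Finset (S × S) := (hE.toFinset ×ˢ hE.toFinset).filter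
      (fun p => ∃ t, t ∈ T ∧ t * t⁻¹ = p.1 ∧ t⁻¹ * t = p.2) with hPdef
  have hP : ∀ p ∈ P, ∃ t, t ∈ T ∧ t * t⁻¹ = p.1 ∧ t⁻¹ * t = p.2 := by
    intro p hp; exact (Finset.mem_filter.mp hp).2
  set Q : Finset S := hE.toFinset.filter (fun e => e ∈ T) with hQdef
  have hQ : ∀ e ∈ Q, InvFG {s | s ∈ T ∧ s * s⁻¹ = e ∧ s⁻¹ * s = e} := by
    intro e heQ
    obtain ⟨h1, h2⟩ := Finset.mem_filter.mp heQ
    exact h e h2 (hE.mem_toFinset.mp h1)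
  set R : Finset S := P.attach.image (fun q => (hP q.1 q.2).choose) with hRdef
  set G : Finset S := R ∪ Q.attach.biUnion (fun q => (hQ q.1 q.2).choose) with hGdef
  have hGT : (↑G : Set S) ⊆ T := by
    intro z hz
    rcases Finset.mem_union.mp (Finset.mem_coe.mp hz) with hz | hz
    · obtain ⟨q, _, hq⟩ := Finset.mem_image.mp hz
      rw [← hq]
      exact (hP q.1 q.2).choose_spec.1
    · obtain ⟨q, _, hq⟩ := Finset.mem_biUnion.mp hz
      have := (hQ q.1 q.2).choose_spec.1 (Finset.mem_coe.mpr hq)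
      exact this.1
  refine ⟨G, hGT, ?_⟩
  ext t
  constructor
  · intro htT
    have ha : (t * t⁻¹) * (t * t⁻¹) = t * t⁻¹ := fidem t
    have hb : (t⁻¹ * t) * (t⁻¹ * t) = t⁻¹ * t := gidem t
    have hpP : (t * t⁻¹, t⁻¹ * t) ∈ P :=
      Finset.mem_filter.mpr ⟨Finset.mem_product.mpr
        ⟨hE.mem_toFinset.mpr ha, hE.mem_toFinset.mpr hb⟩, ⟨t, htT, rfl, rfl⟩⟩
    obtain ⟨hrT, hr1, hr2⟩ := (hP _ hpP).choose_spec
    set r := (hP _ hpP).choose with hrdef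
    have hr1' : r * r⁻¹ = t * t⁻¹ := hr1
    have hr2' : r⁻¹ * r = t⁻¹ * t := hr2
    have hrG : r ∈ (↑G : Set S) := by
      apply Finset.mem_coe.mpr
      apply Finset.mem_union_left
      exact Finset.mem_image.mpr ⟨⟨_, hpP⟩, Finset.mem_attach _ _, rfl⟩
    have hbQ : t⁻¹ * t ∈ Q :=
      Finset.mem_filter.mpr ⟨hE.mem_toFinset.mpr hb, hT.1 _ (hT.2 _ htT) _ htT⟩
    have hgH : r⁻¹ * t ∈ {s | s ∈ T ∧ s * s⁻¹ = t⁻¹ * t ∧ s⁻¹ * s = t⁻¹ * t} := by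
      refine ⟨hT.1 _ (hT.2 _ hrT) _ htT, ?_, ?_⟩
      · calc (r⁻¹ * t) * (r⁻¹ * t)⁻¹ = r⁻¹ * t * (t⁻¹ * r⁻¹⁻¹) := by
              rw [mul_inv_rev r⁻¹ t]
          _ = r⁻¹ * t * (t⁻¹ * r) := by rw [invinv]
          _ = r⁻¹ * (t * t⁻¹) * r := by simp only [mul_assoc]
          _ = r⁻¹ * (r * r⁻¹) * r := by rw [hr1']
          _ = r⁻¹ * r * (r⁻¹ * r) := by simp only [mul_assoc]
          _ = r⁻¹ * r := gidem r
          _ = t⁻¹ * t := hr2'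
      · calc (r⁻¹ * t)⁻¹ * (r⁻¹ * t) = t⁻¹ * r⁻¹⁻¹ * (r⁻¹ * t) := by
              rw [mul_inv_rev r⁻¹ t]
          _ = t⁻¹ * r * (r⁻¹ * t) := by rw [invinv]
          _ = t⁻¹ * (r * r⁻¹) * t := by simp only [mul_assoc]
          _ = t⁻¹ * (t * t⁻¹) * t := by rw [hr1']
          _ = t⁻¹ * t * (t⁻¹ * t) := by simp only [mul_assoc]
          _ = t⁻¹ * t := gidem t
    have hgen : InvGen (↑((hQ _ hbQ).choose) : Set S) (r⁻¹ * t) := by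
      have hspec := (hQ _ hbQ).choose_spec.2
      rw [hspec] at hgH
      exact hgH
    have hsub : (↑((hQ _ hbQ).choose) : Set S) ⊆ (↑G : Set S) := by
      intro y hy
      apply Finset.mem_coe.mpr
      apply Finset.mem_union_right
      exact Finset.mem_biUnion.mpr ⟨⟨_, hbQ⟩, Finset.mem_attach _ _, Finset.mem_coe.mp hy⟩
    have hgenG : InvGen (↑G : Set S) (r⁻¹ * t) := invGen_mono hsub hgen
    have htr : t = r * (r⁻¹ * t) := by
      calc t = t * t⁻¹ * t := (mim t).symm
        _ = r * r⁻¹ * t := by rw [hr1']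
        _ = r * (r⁻¹ * t) := mul_assoc _ _ _
    show InvGen (↑G : Set S) t
    rw [htr]
    exact InvGen.mul (InvGen.base hrG) hgenG
  · intro ht
    exact invGen_mem hGT hT ht

end IS

theorem stmt_4 {S : Type*} [InverseSemigroup S] (hE : {e : S | e * e = e}.Finite) :
    Howson S ↔ ∀ e : S, e * e = e → HowsonOn {s : S | s * s⁻¹ = e ∧ s⁻¹ * s = e} := by
  constructor
  · intro hw e _ U V _ _ hU hV hUfg hVfg
    exact hw U V hU hV hUfg hVfg
  · intro hgrp U V hU hV hUfg hVfg
    have hUV : IsInvSub (U ∩ V) :=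
      ⟨fun a ha b hb => ⟨hU.1 a ha.1 b hb.1, hV.1 a ha.2 b hb.2⟩,
        fun a ha => ⟨hU.2 a ha.1, hV.2 a ha.2⟩⟩
    apply IS.fg_of_subgroups hE hUV
    intro e heUV hee
    have h1 : InvFG {s | s ∈ U ∧ s * s⁻¹ = e ∧ s⁻¹ * s = e} :=
      IS.subgroup_fg hE hU hUfg heUV.1 hee
    have h2 : InvFG {s | s ∈ V ∧ s * s⁻¹ = e ∧ s⁻¹ * s = e} :=
      IS.subgroup_fg hE hV hVfg heUV.2 hee
    have hH := hgrp e hee {s | s ∈ U ∧ s * s⁻¹ = e ∧ s⁻¹ * s = e}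
      {s | s ∈ V ∧ s * s⁻¹ = e ∧ s⁻¹ * s = e}
      (fun s hs => ⟨hs.2.1, hs.2.2⟩) (fun s hs => ⟨hs.2.1, hs.2.2⟩)
      (IS.isInvSub_H hU e) (IS.isInvSub_H hV e) h1 h2
    have hset : {s | s ∈ U ∩ V ∧ s * s⁻¹ = e ∧ s⁻¹ * s = e} =
        {s | s ∈ U ∧ s * s⁻¹ = e ∧ s⁻¹ * s = e} ∩
        {s | s ∈ V ∧ s * s⁻¹ = e ∧ s⁻¹ * s = e} := by
      ext s
      constructor
      · rintro ⟨⟨hs1, hs2⟩, hs3, hs4⟩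
        exact ⟨⟨hs1, hs3, hs4⟩, ⟨hs2, hs3, hs4⟩⟩
      · rintro ⟨⟨hs1, hs3, hs4⟩, ⟨hs2, _, _⟩⟩
        exact ⟨⟨hs1, hs2⟩, hs3, hs4⟩
    rw [hset]
    exact hH
end

section
/- Every inverse subsemigroup of the bicyclic semigroup that does not consist solely of idempotents is finitely generated. -/
def Bicyclic := ℕ × ℕ

instance : Mul Bicyclic :=
  ⟨fun a b => ((a.1 + b.1 - min a.2 b.1, a.2 + b.2 - min a.2 b.1) : ℕ × ℕ)⟩

instance : Inv Bicyclic := ⟨fun a => ((a.2, a.1) : ℕ × ℕ)⟩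

def bmk (a b : ℕ) : Bicyclic := (a, b)

theorem bext (x y : Bicyclic) (h1 : x.1 = y.1) (h2 : x.2 = y.2) : x = y := Prod.ext h1 h2
theorem mfst (x y : Bicyclic) : (x * y).1 = x.1 + y.1 - min x.2 y.1 := rfl
theorem msnd (x y : Bicyclic) : (x * y).2 = x.2 + y.2 - min x.2 y.1 := rfl
theorem ifst (x : Bicyclic) : (x⁻¹).1 = x.2 := rfl
theorem isnd (x : Bicyclic) : (x⁻¹).2 = x.1 := rfl
theorem binv (a b : ℕ) : (bmk a b)⁻¹ = bmk b a := rfl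
theorem bmkfst (a b : ℕ) : (bmk a b).1 = a := rfl
theorem bmksnd (a b : ℕ) : (bmk a b).2 = b := rfl

theorem stmt_8 (T : Set Bicyclic) (hT : IsInvSub T)
    (hni : ∃ t ∈ T, ¬ t * t = t) : InvFG T := by
  classical
  obtain ⟨hTm, hTi⟩ := hT
  obtain ⟨t, htT, htn⟩ := hni
  have hne : t.1 ≠ t.2 := by
    intro h
    apply htn
    apply bext <;> simp [mfst, msnd] <;> omega
  have hex : ∃ k, 0 < k ∧ ∃ p, bmk p (p + k) ∈ T := by
    rcases Nat.lt_or_ge t.1 t.2 with h | h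
    · refine ⟨t.2 - t.1, by omega, t.1, ?_⟩
      have e : bmk t.1 (t.1 + (t.2 - t.1)) = t := by
        apply bext <;> simp [bmkfst, bmksnd] <;> omega
      rwa [e]
    · refine ⟨t.1 - t.2, by omega, t.2, ?_⟩
      have e : bmk t.2 (t.2 + (t.1 - t.2)) = t⁻¹ := by
        apply bext <;> simp [bmkfst, bmksnd, ifst, isnd] <;> omega
      rw [e]; exact hTi t htT
  set g := Nat.find hex with hgdef
  obtain ⟨hg0, r0, hr0⟩ := Nat.find_spec hex
  have hgmin : ∀ k, 0 < k → (∃ p, bmk p (p+k) ∈ T) → g ≤ k :=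
    fun k hk hw => Nat.find_min' hex ⟨hk, hw⟩
  -- powers
  have pow : ∀ N p q, bmk p q ∈ T → p < q → bmk p (q + N*(q-p)) ∈ T := by
    intro N
    induction N with
    | zero => intro p q h _; simpa using h
    | succ n ih =>
      intro p q h hpq
      have h1 := hTm _ (ih p q h hpq) _ h
      have e : bmk p (q + n*(q-p)) * bmk p q = bmk p (q + (n+1)*(q-p)) := by
        rw [Nat.succ_mul]
        apply bext <;> simp [mfst, msnd, bmkfst, bmksnd] <;>
          generalize n*(q-p) = s <;> omega
      rwa [e] at h1
  -- strip to minimal difference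
  have stripA : ∀ p q, bmk p q ∈ T → p < q → bmk p (p + g) ∈ T := by
    intro p q h hpq
    have hu : bmk p (q + r0*(q-p)) ∈ T := pow r0 p q h hpq
    set Q := q + r0*(q-p) with hQ
    have hrQ : r0 ≤ Q := by
      have h1 : r0 * 1 ≤ r0 * (q - p) := Nat.mul_le_mul_left _ (by omega)
      calc r0 = r0 * 1 := (mul_one r0).symm
        _ ≤ r0 * (q - p) := h1
        _ ≤ Q := Nat.le_add_left _ _
    have e1 : bmk p Q * bmk r0 (r0 + g) = bmk p (Q + g) := by
      apply bext <;> simp [mfst, msnd, bmkfst, bmksnd] <;> omega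
    have e2 : bmk p (Q + g) * (bmk p Q)⁻¹ = bmk p (p + g) := by
      rw [binv]
      apply bext <;> simp [mfst, msnd, bmkfst, bmksnd] <;> omega
    have h1 := hTm _ hu _ hr0
    rw [e1] at h1
    have h2 := hTm _ h1 _ (hTi _ hu)
    rwa [e2] at h2
  -- all differences are multiples of g
  have hdvd : ∀ d p q, bmk p q ∈ T → p < q → q - p = d → g ∣ d := by
    intro d
    induction d using Nat.strong_induction_on with
    | _ d ih =>
      intro p q h hpq hd
      have hgle : g ≤ d := by
        refine hgmin d (by omega) ⟨p, ?_⟩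
        have e : bmk p (p + d) = bmk p q := by
          apply bext <;> simp [bmkfst, bmksnd] <;> omega
        rwa [e]
      rcases eq_or_lt_of_le hgle with he | hlt
      · exact he ▸ dvd_refl g
      · have hp : bmk p (p + g) ∈ T := stripA p q h hpq
        have hnew : bmk (p+g) q ∈ T := by
          have h1 := hTm _ (hTi _ hp) _ h
          have e : (bmk p (p+g))⁻¹ * bmk p q = bmk (p+g) q := by
            rw [binv]
            apply bext <;> simp [mfst, msnd, bmkfst, bmksnd] <;> omega
          rwa [e] at h1
        have hd2 : g ∣ (d - g) := ih (d - g) (by omega) (p+g) q hnew (by omega) (by omega)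
        have hdd : d = (d - g) + g := by omega
        rw [hdd]
        exact Nat.dvd_add hd2 dvd_rfl
  -- minimal left coordinate among difference-g elements
  have hPx : ∃ p, bmk p (p + g) ∈ T := ⟨r0, hr0⟩
  set m := Nat.find hPx with hmdef
  have hm : bmk m (m + g) ∈ T := Nat.find_spec hPx
  have hmmin : ∀ p, bmk p (p + g) ∈ T → m ≤ p := fun p hp => Nat.find_min' hPx hp
  -- down-shift in P
  have Pdown : ∀ p, bmk p (p + g) ∈ T → m + g ≤ p → bmk (p-g) (p-g+g) ∈ T := by
    intro p hp hple
    rcases eq_or_lt_of_le hple with he | hlt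
    · have e : p - g = m := by omega
      rw [e]; exact hm
    · have h1 := hTm _ hm _ hp
      have e : bmk m (m+g) * bmk p (p+g) = bmk (p-g) (p+g) := by
        apply bext <;> simp [mfst, msnd, bmkfst, bmksnd] <;> omega
      rw [e] at h1
      exact stripA (p-g) (p+g) h1 (by omega)
  -- decomposition of P
  have Pdec : ∀ p, bmk p (p + g) ∈ T → ∃ r k, bmk r (r+g) ∈ T ∧ r < m + g ∧ p = r + k * g := by
    intro p
    induction p using Nat.strong_induction_on with
    | _ p ih =>
      intro hp
      by_cases hc : p < m + g
      · exact ⟨p, 0, hp, hc, by omega⟩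
      · have hm0 : m ≤ p := hmmin p hp
        have h1 := Pdown p hp (by omega)
        obtain ⟨r, k, h2, h3, h4⟩ := ih (p - g) (by omega) h1
        refine ⟨r, k + 1, h2, h3, ?_⟩
        have e : p = (p - g) + g := by omega
        rw [e, h4]; ring
  -- down-shift in E
  have Edown : ∀ a, bmk a a ∈ T → m + g ≤ a → bmk (a-g) (a-g) ∈ T := by
    intro a ha hle
    have h1 := hTm _ hm _ ha
    have e1 : bmk m (m+g) * bmk a a = bmk (a-g) a := by
      apply bext <;> simp [mfst, msnd, bmkfst, bmksnd] <;> omega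
    rw [e1] at h1
    have h2 := hTm _ h1 _ (hTi _ hm)
    have e2 : bmk (a-g) a * (bmk m (m+g))⁻¹ = bmk (a-g) (a-g) := by
      rw [binv]
      apply bext <;> simp [mfst, msnd, bmkfst, bmksnd] <;> omega
    rwa [e2] at h2
  -- decomposition of E
  have Edec : ∀ a, bmk a a ∈ T →
      ∃ r k, bmk r r ∈ T ∧ r < m + g ∧ a = r + k * g ∧ (k = 0 ∨ m ≤ r) := by
    intro a
    induction a using Nat.strong_induction_on with
    | _ a ih =>
      intro ha
      by_cases hc : a < m + g
      · exact ⟨a, 0, ha, hc, by omega, Or.inl rfl⟩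
      · have h1 := Edown a ha (by omega)
        obtain ⟨r, k, h2, h3, h4, h5⟩ := ih (a - g) (by omega) h1
        refine ⟨r, k + 1, h2, h3, ?_, Or.inr ?_⟩
        · have e : a = (a - g) + g := by omega
          rw [e, h4]; ring
        · rcases h5 with h5 | h5
          · subst h5; simp at h4; omega
          · exact h5
  -- the generating set
  set X : Finset Bicyclic :=
    ((Finset.range (m+g)).filter (fun a => bmk a a ∈ T)).image (fun a => bmk a a) ∪
    ((Finset.range (m+g)).filter (fun p => bmk p (p+g) ∈ T)).image (fun p => bmk p (p+g))
    with hXdef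
  have hXsub : (↑X : Set Bicyclic) ⊆ T := by
    intro x hx
    simp only [hXdef, Finset.coe_union, Set.mem_union, Finset.coe_image, Set.mem_image,
      Finset.mem_coe, Finset.mem_filter, Finset.mem_range] at hx
    rcases hx with ⟨a, ⟨_, ha⟩, he⟩ | ⟨p, ⟨_, hp⟩, he⟩ <;> rw [← he] <;> assumption
  have hXE : ∀ a, a < m + g → bmk a a ∈ T → InvGen (↑X : Set Bicyclic) (bmk a a) := by
    intro a h1 h2
    refine InvGen.base ?_
    simp only [hXdef, Finset.coe_union, Set.mem_union, Finset.coe_image, Set.mem_image,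
      Finset.mem_coe, Finset.mem_filter, Finset.mem_range]
    exact Or.inl ⟨a, ⟨h1, h2⟩, rfl⟩
  have hXP : ∀ p, p < m + g → bmk p (p+g) ∈ T → InvGen (↑X : Set Bicyclic) (bmk p (p+g)) := by
    intro p h1 h2
    refine InvGen.base ?_
    simp only [hXdef, Finset.coe_union, Set.mem_union, Finset.coe_image, Set.mem_image,
      Finset.mem_coe, Finset.mem_filter, Finset.mem_range]
    exact Or.inr ⟨p, ⟨h1, h2⟩, rfl⟩
  have hmX : InvGen (↑X : Set Bicyclic) (bmk m (m+g)) := hXP m (by omega) hm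
  -- generation of P-elements
  have genP : ∀ k r, InvGen (↑X : Set Bicyclic) (bmk r (r+g)) →
      InvGen (↑X : Set Bicyclic) (bmk (r + k*g) (r + k*g + g)) := by
    intro k
    induction k with
    | zero => intro r h; simpa using h
    | succ n ih =>
      intro r h
      have ihs := ih r h
      set s := r + n * g with hs
      have e : (bmk s (s+g))⁻¹ * bmk s (s+g) * bmk s (s+g) = bmk (s+g) (s+g+g) := by
        rw [binv]
        apply bext <;> simp [mfst, msnd, bmkfst, bmksnd] <;> omega
      have hg2 : InvGen (↑X : Set Bicyclic) (bmk (s+g) (s+g+g)) := by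
        rw [← e]; exact InvGen.mul (InvGen.mul (InvGen.inv ihs) ihs) ihs
      have e2 : r + (n+1)*g = s + g := by rw [hs]; ring
      rw [e2]; exact hg2
  -- powers within a column
  have genPow : ∀ j p, InvGen (↑X : Set Bicyclic) (bmk p (p+g)) →
      InvGen (↑X : Set Bicyclic) (bmk p (p + (j+1)*g)) := by
    intro j
    induction j with
    | zero => intro p h; simpa using h
    | succ n ih =>
      intro p h
      have ihp := ih p h
      have e2 : (n+1+1)*g = (n+1)*g + g := by ring
      rw [e2]
      have e : bmk p (p + (n+1)*g) * bmk p (p+g) = bmk p (p + ((n+1)*g + g)) := by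
        apply bext <;> simp [mfst, msnd, bmkfst, bmksnd] <;>
          generalize (n+1)*g = s <;> omega
      rw [show p + ((n+1)*g + g) = p + (n+1)*g + g by ring] at e ⊢
      rw [← e]; exact InvGen.mul ihp h
  -- generation of idempotents above m
  have genE : ∀ k a, m ≤ a → InvGen (↑X : Set Bicyclic) (bmk a a) →
      InvGen (↑X : Set Bicyclic) (bmk (a + k*g) (a + k*g)) := by
    intro k
    induction k with
    | zero => intro a _ h; simpa using h
    | succ n ih =>
      intro a hma h
      have ihs := ih a hma h
      set s := a + n * g with hs
      have hms : m ≤ s := by omega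
      have e : (bmk m (m+g))⁻¹ * bmk s s * bmk m (m+g) = bmk (s+g) (s+g) := by
        rw [binv]
        apply bext <;> simp [mfst, msnd, bmkfst, bmksnd] <;> omega
      have hg2 : InvGen (↑X : Set Bicyclic) (bmk (s+g) (s+g)) := by
        rw [← e]; exact InvGen.mul (InvGen.mul (InvGen.inv hmX) ihs) hmX
      have e2 : a + (n+1)*g = s + g := by rw [hs]; ring
      rw [e2]; exact hg2
  -- key: any element with .1 < .2 is generated
  have key : ∀ p q, bmk p q ∈ T → p < q → InvGen (↑X : Set Bicyclic) (bmk p q) := by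
    intro p q h hpq
    obtain ⟨k, hk⟩ := hdvd (q - p) p q h hpq rfl
    have hp : bmk p (p + g) ∈ T := stripA p q h hpq
    obtain ⟨r, j, h2, h3, h4⟩ := Pdec p hp
    have gen1 : InvGen (↑X : Set Bicyclic) (bmk p (p+g)) := by
      rw [h4]; exact genP j r (hXP r h3 h2)
    rcases k with _ | k1
    · simp at hk; omega
    · have hq : q = p + (k1+1)*g := by
        rw [mul_comm] at hk
        generalize hA : (k1+1)*g = A at hk ⊢
        omega
      rw [hq]
      exact genPow k1 p gen1
  refine ⟨X, hXsub, ?_⟩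
  ext x
  simp only [Set.mem_setOf_eq]
  constructor
  · intro hx
    have hxe : bmk x.1 x.2 = x := bext _ _ rfl rfl
    rcases Nat.lt_trichotomy x.1 x.2 with h | h | h
    · rw [← hxe]; exact key x.1 x.2 (by rwa [hxe]) h
    · have hxE : bmk x.1 x.1 ∈ T := by rw [← h] at hxe; rwa [hxe]
      obtain ⟨r, k, h2, h3, h4, h5⟩ := Edec x.1 hxE
      have : InvGen (↑X : Set Bicyclic) (bmk x.1 x.1) := by
        rcases h5 with h5 | h5
        · rw [h4, h5]; simpa using hXE r h3 h2
        · rw [h4]; exact genE k r h5 (hXE r h3 h2)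
      rw [← h] at hxe; rw [← hxe]; exact this
    · have hinv : bmk x.2 x.1 ∈ T := by
        have := hTi x hx
        have e : x⁻¹ = bmk x.2 x.1 := bext _ _ rfl rfl
        rwa [e] at this
      have hgen := key x.2 x.1 hinv h
      have e : (bmk x.2 x.1)⁻¹ = x := by
        rw [binv]; exact hxe
      rw [← e]; exact InvGen.inv hgen
  · intro hx
    induction hx with
    | base h => exact hXsub h
    | mul _ _ iha ihb => exact hTm _ iha _ ihb
    | inv _ ih => exact hTi _ ih
end
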